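/- arXiv:1804.04704 — 3 statements merged into one kernel-verified Lean document; each statement's English description precedes it below -/
import Mathlib

section
/- Suppose ν has a generating sequence Q_0 = X, Q_1 = Y, Q_2, … in which every Q_l is an eigenfunction for H_{i,j,t,x}. Then S^{R_𝔪}(ν) is NOT finitely generated over S^{(A_{i,j,t,x})_𝔫}(ν) if and only if j ≠ n and (n/j) does not divide d(l) for all l ≥ 2. -/
open MvPolynomial Finset Pointwise

noncomputable section

namespace DuttaPaper

/-- The polynomial ring `K[X,Y]`, with `X = X 0` and `Y = X 1`. -/
abbrev Poly (K : Type) [Field K] : Type := MvPolynomial (Fin 2) K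

/-- The rational function field `K(X,Y)`. -/
abbrev RF (K : Type) [Field K] : Type := FractionRing (Poly K)

variable {K : Type} [Field K]

/-- The `K`-algebra endomorphism of `K[X,Y]` sending `X ↦ u • X`, `Y ↦ v • Y`;
this is the action of `(u,v) ∈ 𝕌_m × 𝕌_n` on `K[X,Y]`. -/
def act (u v : K) : Poly K →ₐ[K] Poly K :=
  MvPolynomial.aeval ![MvPolynomial.C u * MvPolynomial.X 0,
    MvPolynomial.C v * MvPolynomial.X 1]

/-- Membership in the set `H_{i,j,t,x} = {(α^{a i}, β^{b j}) : b ≡ a x (mod t)} ⊆ K × K`. -/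
def Hmem (α β : K) (i j t x : ℕ) (p : K × K) : Prop :=
  ∃ a b : ℤ, b ≡ a * (x : ℤ) [ZMOD (t : ℤ)] ∧
    p = (α ^ (a * (i : ℤ)), β ^ (b * (j : ℤ)))

/-- `f ∈ K[X,Y]` is an eigenfunction for `H_{i,j,t,x}`. -/
def IsEigen (α β : K) (i j t x : ℕ) (f : Poly K) : Prop :=
  ∀ p : K × K, Hmem α β i j t x p → ∃ lam : K, act p.1 p.2 f = lam • f

/-- `f ∈ K[X,Y]` belongs to the invariant ring `A_{i,j,t,x} = K[X,Y]^{H_{i,j,t,x}}`. -/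
def Invariant (α β : K) (i j t x : ℕ) (f : Poly K) : Prop :=
  ∀ p : K × K, Hmem α β i j t x p → act p.1 p.2 f = f

/-- A `ℚ`-valued (rational rank 1) valuation on a field `L`: the data of the values of the
nonzero elements (the value of `0` is irrelevant). -/
structure RatVal (L : Type) [Field L] where
  v : L → ℚ
  v_mul : ∀ a b : L, a ≠ 0 → b ≠ 0 → v (a * b) = v a + v b
  v_add : ∀ a b : L, a ≠ 0 → b ≠ 0 → a + b ≠ 0 → min (v a) (v b) ≤ v (a + b)

/-- Value of a polynomial under a valuation of `K(X,Y)`. -/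
def vP (ν : RatVal (RF K)) (f : Poly K) : ℚ :=
  ν.v (algebraMap (Poly K) (RF K) f)

/-- `ν` dominates `R_𝔪 = K[X,Y]_{(X,Y)}` : `ν ≥ 0` on `R_𝔪` and `ν > 0` on its maximal
ideal (expressed on the level of polynomials). -/
def DominatesRm (ν : RatVal (RF K)) : Prop :=
  (∀ f : Poly K, f ≠ 0 → 0 ≤ vP ν f) ∧
  (∀ f : Poly K, f ≠ 0 → MvPolynomial.constantCoeff f = 0 → 0 < vP ν f)

/-- `ν` is non-discrete: its value group is not a cyclic subgroup of `ℚ`. -/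
def Nondiscrete (ν : RatVal (RF K)) : Prop :=
  ¬ ∃ g : ℚ, ∀ z : RF K, z ≠ 0 → ∃ k : ℤ, ν.v z = (k : ℚ) * g

/-- Data of a candidate generating sequence: the polynomials `Q_l` and the numbers `m̄_l`. -/
structure GSData (K : Type) [Field K] where
  Q : ℕ → Poly K
  mbar : ℕ → ℕ

/-- `γ_l = ν(Q_l)`. -/
def GSData.γ (G : GSData K) (ν : RatVal (RF K)) (l : ℕ) : ℚ := vP ν (G.Q l)

/-- `d(l) = m̄_1 ⋯ m̄_{l-1}` (so `d(1) = 1`). -/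
def GSData.d (G : GSData K) (l : ℕ) : ℕ := ∏ k ∈ Finset.Icc 1 (l - 1), G.mbar k

/-- An exponent vector `e` is admissible when `e k < m̄_k` for all `k ≥ 1`. -/
def Adm (G : GSData K) (e : ℕ →₀ ℕ) : Prop := ∀ k, 1 ≤ k → e k < G.mbar k

/-- The monomial `X^{e 0} Q_1^{e 1} Q_2^{e 2} ⋯` in the generating sequence. -/
def Pmon (G : GSData K) (e : ℕ →₀ ℕ) : Poly K := e.prod fun k a => G.Q k ^ a

/-- The value `Σ_k e k • γ_k` of such a monomial. -/
def evalγ (ν : RatVal (RF K)) (G : GSData K) (e : ℕ →₀ ℕ) : ℚ :=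
  e.sum fun k a => (a : ℚ) * G.γ ν k

/-- `(Q_l)_{l≥0}` is a generating sequence for `ν` in `K[X,Y]` (properties (1)–(4) of
Section 2 of the paper, for the algorithm of Cutkosky–Vinh). -/
structure IsGenSeq (ν : RatVal (RF K)) (G : GSData K) : Prop where
  hQ0 : G.Q 0 = MvPolynomial.X 0
  hQ1 : G.Q 1 = MvPolynomial.X 1
  /-- `m̄_l ≥ 1`. -/
  hmbar_pos : ∀ l, 1 ≤ l → 0 < G.mbar l
  /-- `m̄_l γ_l ∈ G(γ_0, …, γ_{l-1})`. -/
  hmbar_mem : ∀ l, 1 ≤ l → ∃ c : ℕ → ℤ,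
      (G.mbar l : ℚ) * G.γ ν l = ∑ k ∈ Finset.range l, (c k : ℚ) * G.γ ν k
  /-- `m̄_l` is minimal with this property. -/
  hmbar_min : ∀ l, 1 ≤ l → ∀ q : ℕ, 0 < q →
      (∃ c : ℕ → ℤ, (q : ℚ) * G.γ ν l = ∑ k ∈ Finset.range l, (c k : ℚ) * G.γ ν k) →
      G.mbar l ≤ q
  /-- (1) `γ_{l+1} > m̄_l γ_l`. -/
  hgrowth : ∀ l, 1 ≤ l → (G.mbar l : ℚ) * G.γ ν l < G.γ ν (l + 1)
  /-- (2) `Q_l = Y^{d(l)} + (terms of lower Y-degree)`. -/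
  hmonic : ∀ l, 1 ≤ l →
      G.Q l - MvPolynomial.X 1 ^ G.d l = 0 ∨
      MvPolynomial.degreeOf 1 (G.Q l - MvPolynomial.X 1 ^ G.d l) < G.d l
  /-- (3), existence and uniqueness of the expansion of any nonzero `f` in terms of the
  admissible monomials `X^{e 0} Q_1^{e 1} ⋯ Q_r^{e r}`, `e k < m̄_k` for `k ≥ 1`. -/
  hexpand : ∀ f : Poly K, f ≠ 0 →
      ∃! c : (ℕ →₀ ℕ) →₀ K,
        (∀ e ∈ c.support, Adm G e) ∧
        f = c.sum fun e a => MvPolynomial.C a * Pmon G e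
  /-- (3), the nonzero terms of the expansion have pairwise distinct values and
  `ν(f)` is the minimum of those values. -/
  hval : ∀ f : Poly K, f ≠ 0 → ∀ c : (ℕ →₀ ℕ) →₀ K,
      (∀ e ∈ c.support, Adm G e) →
      f = (c.sum fun e a => MvPolynomial.C a * Pmon G e) →
      (∀ e ∈ c.support, ∀ e' ∈ c.support, evalγ ν G e = evalγ ν G e' → e = e') ∧
      ∃ e₀ ∈ c.support, vP ν f = evalγ ν G e₀ ∧
        ∀ e ∈ c.support, evalγ ν G e₀ ≤ evalγ ν G e
  /-- (4) `Q_{l+1} = Q_l^{m̄_l} - λ_l X^{c_0} Y^{c_1} Q_2^{c_2} ⋯ Q_{l-1}^{c_{l-1}}` with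
  `0 ≤ c_k < m̄_k` for `k ≥ 1` and `m̄_l γ_l = Σ_{k<l} c_k γ_k`. -/
  hrec : ∀ l, 1 ≤ l → ∃ lam : K, lam ≠ 0 ∧ ∃ cc : ℕ → ℕ,
      (∀ k, 1 ≤ k → k < l → cc k < G.mbar k) ∧
      G.Q (l + 1) =
        G.Q l ^ G.mbar l - MvPolynomial.C lam * ∏ k ∈ Finset.range l, G.Q k ^ cc k ∧
      (G.mbar l : ℚ) * G.γ ν l = ∑ k ∈ Finset.range l, (cc k : ℚ) * G.γ ν k

/-- The valuation semigroup `S^{R_𝔪}(ν) = {ν(h) : 0 ≠ h ∈ R_𝔪}`. -/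
def SRm (ν : RatVal (RF K)) : Set ℚ :=
  {q | ∃ f g : Poly K, f ≠ 0 ∧ MvPolynomial.constantCoeff g ≠ 0 ∧
    q = vP ν f - vP ν g}

/-- The valuation semigroup `S^{(A_{i,j,t,x})_𝔫}(ν)` of the invariant ring localized at
`𝔫 = (X,Y) ∩ A_{i,j,t,x}`. -/
def SA (ν : RatVal (RF K)) (α β : K) (i j t x : ℕ) : Set ℚ :=
  {q | ∃ f g : Poly K, f ≠ 0 ∧ Invariant α β i j t x f ∧ Invariant α β i j t x g ∧
    MvPolynomial.constantCoeff g ≠ 0 ∧ q = vP ν f - vP ν g}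

/-- `S` is a finitely generated module over the subsemigroup `T`:
`S = {s_1, …, s_k} + T` for finitely many `s_i ∈ S`. -/
def FGover (S T : Set ℚ) : Prop :=
  ∃ F : Finset ℚ, (F : Set ℚ) ⊆ S ∧ S = (F : Set ℚ) + T


lemma algMap_ne {f : Poly K} (hf : f ≠ 0) : algebraMap (Poly K) (RF K) f ≠ 0 :=
  (map_ne_zero_iff _ (IsFractionRing.injective (Poly K) (RF K))).2 hf

lemma vP_mul (ν : RatVal (RF K)) {f g : Poly K} (hf : f ≠ 0) (hg : g ≠ 0) :
    vP ν (f * g) = vP ν f + vP ν g := by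
  unfold vP; rw [map_mul]; exact ν.v_mul _ _ (algMap_ne hf) (algMap_ne hg)

lemma vP_one (ν : RatVal (RF K)) : vP ν (1 : Poly K) = 0 := by
  have h := vP_mul (K := K) ν (one_ne_zero) (one_ne_zero)
  rw [one_mul] at h; linarith

lemma vP_pow (ν : RatVal (RF K)) {f : Poly K} (hf : f ≠ 0) (c : ℕ) :
    vP ν (f ^ c) = (c : ℚ) * vP ν f := by
  induction c with
  | zero => simp [vP_one]
  | succ k ih =>
      rw [pow_succ, vP_mul ν (pow_ne_zero _ hf) hf, ih]
      push_cast; ring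

lemma vP_C (ν : RatVal (RF K)) (hdom : DominatesRm ν) {a : K} (ha : a ≠ 0) :
    vP ν (MvPolynomial.C a : Poly K) = 0 := by
  have h1 : (MvPolynomial.C a : Poly K) * MvPolynomial.C a⁻¹ = 1 := by
    rw [← map_mul, mul_inv_cancel₀ ha, map_one]
  have ha' : (MvPolynomial.C a : Poly K) ≠ 0 := by simpa using ha
  have ha'' : (MvPolynomial.C a⁻¹ : Poly K) ≠ 0 := by simpa using inv_ne_zero ha
  have h2 := vP_mul (K := K) ν ha' ha''
  rw [h1, vP_one] at h2
  have h3 := hdom.1 _ ha'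
  have h4 := hdom.1 _ ha''
  linarith

lemma vP_unit (ν : RatVal (RF K)) (hdom : DominatesRm ν) {g : Poly K}
    (hg : MvPolynomial.constantCoeff g ≠ 0) : vP ν g = 0 := by
  set c := MvPolynomial.constantCoeff g with hc
  have hg0 : g ≠ 0 := fun h => hg (by simp [hc, h])
  set h : Poly K := MvPolynomial.C c - g with hh
  by_cases h0 : h = 0
  · have hgC : g = MvPolynomial.C c := ((sub_eq_zero.1 h0)).symm
    rw [hgC]; exact vP_C ν hdom hg
  · have hhc : MvPolynomial.constantCoeff h = 0 := by simp [hh, hc]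
    have hpos : 0 < vP ν h := hdom.2 h h0 hhc
    have hge : 0 ≤ vP ν g := hdom.1 g hg0
    have hsum : g + h = MvPolynomial.C c := by rw [hh]; ring
    have hCne : (MvPolynomial.C c : Poly K) ≠ 0 := by simpa using hg
    have hne : algebraMap (Poly K) (RF K) g + algebraMap (Poly K) (RF K) h ≠ 0 := by
      rw [← RingHom.map_add]
      exact algMap_ne (hsum ▸ hCne)
    have hadd := ν.v_add _ _ (algMap_ne hg0) (algMap_ne h0) hne
    rw [← RingHom.map_add] at hadd
    have hvsum : vP ν (g + h) = 0 := by rw [hsum]; exact vP_C ν hdom hg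
    have hadd' : min (vP ν g) (vP ν h) ≤ vP ν (g + h) := hadd
    rw [hvsum] at hadd'
    rcases min_le_iff.1 hadd' with h' | h' <;> linarith


section GSLemmas

variable (ν : RatVal (RF K)) (G : GSData K)

lemma d_pos (hG : IsGenSeq ν G) (l : ℕ) : 0 < G.d l := by
  apply Finset.prod_pos
  intro k hk
  exact hG.hmbar_pos k (Finset.mem_Icc.1 hk).1

lemma coeff_Q_lead (hG : IsGenSeq ν G) {l : ℕ} (hl : 1 ≤ l) :
    MvPolynomial.coeff (Finsupp.single 1 (G.d l)) (G.Q l) = 1 := by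
  have hd := d_pos ν G hG l
  have hX : MvPolynomial.coeff (Finsupp.single 1 (G.d l))
      ((MvPolynomial.X 1 : Poly K) ^ G.d l) = 1 := by
    rw [MvPolynomial.coeff_X_pow]; simp
  rcases hG.hmonic l hl with h | h
  · rw [sub_eq_zero] at h; rw [h, hX]
  · have h0 : MvPolynomial.coeff (Finsupp.single 1 (G.d l))
        (G.Q l - MvPolynomial.X 1 ^ G.d l) = 0 := by
      rw [← MvPolynomial.notMem_support_iff]
      intro hmem
      have := (MvPolynomial.degreeOf_lt_iff hd).1 h _ hmem
      simp at this
    rw [MvPolynomial.coeff_sub, hX] at h0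
    exact sub_eq_zero.1 h0

lemma Q_ne_zero (hG : IsGenSeq ν G) (l : ℕ) : G.Q l ≠ 0 := by
  cases l with
  | zero => rw [hG.hQ0]; exact MvPolynomial.X_ne_zero (σ := Fin 2) (R := K) 0
  | succ k =>
      intro h
      have := coeff_Q_lead ν G hG (l := k + 1) (by omega)
      rw [h] at this
      simp only [MvPolynomial.coeff_zero] at this
      exact one_ne_zero this.symm

lemma γ_pos (hdom : DominatesRm ν) (hG : IsGenSeq ν G) : ∀ l, 0 < G.γ ν l := by
  have h0 : 0 < G.γ ν 0 := by
    apply hdom.2 _ (Q_ne_zero ν G hG 0)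
    rw [hG.hQ0]; simp
  have h1 : 0 < G.γ ν 1 := by
    apply hdom.2 _ (Q_ne_zero ν G hG 1)
    rw [hG.hQ1]; simp
  intro l
  induction l with
  | zero => exact h0
  | succ k ih =>
      rcases Nat.eq_zero_or_pos k with hk | hk
      · subst hk; exact h1
      · have hg := hG.hgrowth k hk
        have hm : (1 : ℚ) ≤ (G.mbar k : ℚ) := by exact_mod_cast hG.hmbar_pos k hk
        nlinarith

lemma γ_step (hdom : DominatesRm ν) (hG : IsGenSeq ν G) {l : ℕ} (hl : 1 ≤ l) :
    G.γ ν l < G.γ ν (l + 1) := by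
  have hg := hG.hgrowth l hl
  have hm : (1 : ℚ) ≤ (G.mbar l : ℚ) := by exact_mod_cast hG.hmbar_pos l hl
  have hp := γ_pos ν G hdom hG l
  nlinarith

lemma γ_mono (hdom : DominatesRm ν) (hG : IsGenSeq ν G) :
    ∀ l k, 1 ≤ k → k < l → G.γ ν k < G.γ ν l := by
  intro l
  induction l with
  | zero => omega
  | succ p ih =>
      intro k hk hkl
      rcases Nat.lt_succ_iff_lt_or_eq.1 hkl with h | h
      · exact lt_trans (ih k hk h) (γ_step ν G hdom hG (by omega))
      · subst h; exact γ_step ν G hdom hG hk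

lemma Pmon_ne_zero (hG : IsGenSeq ν G) (e : ℕ →₀ ℕ) : Pmon G e ≠ 0 := by
  unfold Pmon Finsupp.prod
  exact Finset.prod_ne_zero_iff.2 fun k _ => pow_ne_zero _ (Q_ne_zero ν G hG k)

lemma vP_Pmon (hG : IsGenSeq ν G) (e : ℕ →₀ ℕ) :
    vP ν (Pmon G e) = evalγ ν G e := by
  have key : ∀ s : Finset ℕ, vP ν (∏ k ∈ s, G.Q k ^ e k) =
      ∑ k ∈ s, (e k : ℚ) * G.γ ν k := by
    intro s
    induction s using Finset.induction_on with
    | empty => simp [vP_one]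
    | @insert a s' hx ih =>
        rw [Finset.prod_insert hx, Finset.sum_insert hx,
          vP_mul ν (pow_ne_zero _ (Q_ne_zero ν G hG a))
            (Finset.prod_ne_zero_iff.2 fun k _ => pow_ne_zero _ (Q_ne_zero ν G hG k)),
          vP_pow ν (Q_ne_zero ν G hG a), ih]
        rfl
  exact key e.support

lemma evalγ_add (e e' : ℕ →₀ ℕ) :
    evalγ ν G (e + e') = evalγ ν G e + evalγ ν G e' := by
  unfold evalγ
  apply Finsupp.sum_add_index' (by simp)
  intro a b c; push_cast; ring

lemma Pmon_add (e e' : ℕ →₀ ℕ) : Pmon G (e + e') = Pmon G e * Pmon G e' := by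
  unfold Pmon
  exact Finsupp.prod_add_index' (by simp) fun a b c => pow_add _ _ _

lemma evalγ_single (k c : ℕ) :
    evalγ ν G (Finsupp.single k c) = (c : ℚ) * G.γ ν k := by
  unfold evalγ
  exact Finsupp.sum_single_index (by simp)

lemma Pmon_single (k c : ℕ) : Pmon G (Finsupp.single k c) = G.Q k ^ c := by
  unfold Pmon
  exact Finsupp.prod_single_index (pow_zero _)

lemma evalγ_nonneg (hdom : DominatesRm ν) (hG : IsGenSeq ν G) (e : ℕ →₀ ℕ) :
    0 ≤ evalγ ν G e := by
  apply Finset.sum_nonneg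
  intro k _
  exact mul_nonneg (by positivity) (le_of_lt (γ_pos ν G hdom hG k))

lemma vP_eq_evalγ (hG : IsGenSeq ν G) {f : Poly K} (hf : f ≠ 0) :
    ∃ e, vP ν f = evalγ ν G e := by
  obtain ⟨c, ⟨hadm, hsum⟩, -⟩ := hG.hexpand f hf
  obtain ⟨-, e₀, -, hv, -⟩ := hG.hval f hf c hadm hsum
  exact ⟨e₀, hv⟩

lemma mem_SRm_iff (hdom : DominatesRm ν) (hG : IsGenSeq ν G) {q : ℚ} :
    q ∈ SRm ν ↔ ∃ e, q = evalγ ν G e := by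
  constructor
  · rintro ⟨f, g, hf, hg, rfl⟩
    obtain ⟨e, he⟩ := vP_eq_evalγ ν G hG hf
    exact ⟨e, by rw [vP_unit ν hdom hg, he]; ring⟩
  · rintro ⟨e, rfl⟩
    refine ⟨Pmon G e, 1, Pmon_ne_zero ν G hG e, by simp, ?_⟩
    rw [vP_one, vP_Pmon ν G hG]; ring

end GSLemmas


section ActLemmas

variable (ν : RatVal (RF K)) (G : GSData K) (α β : K) (i j t x : ℕ)

lemma act_C (u v a : K) : act u v (MvPolynomial.C a) = MvPolynomial.C a := by
  simp [act, MvPolynomial.algebraMap_eq]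

lemma act_monomial (u v : K) (σ : Fin 2 →₀ ℕ) (a : K) :
    act u v (MvPolynomial.monomial σ a) =
      MvPolynomial.monomial σ (u ^ σ 0 * v ^ σ 1 * a) := by
  rw [MvPolynomial.monomial_eq, MvPolynomial.monomial_eq]
  rw [Finsupp.prod_fintype _ _ fun i => pow_zero _]
  simp only [Fin.prod_univ_two]
  simp only [act, map_mul, map_pow, MvPolynomial.aeval_X, MvPolynomial.aeval_C,
    MvPolynomial.algebraMap_eq, Matrix.cons_val_zero, Matrix.cons_val_one, Matrix.head_cons,
    mul_pow]
  rw [← MvPolynomial.C_pow, ← MvPolynomial.C_pow]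
  ring

lemma coeff_act (u v : K) (f : Poly K) (σ : Fin 2 →₀ ℕ) :
    MvPolynomial.coeff σ (act u v f) = u ^ σ 0 * v ^ σ 1 * MvPolynomial.coeff σ f := by
  induction f using MvPolynomial.induction_on' with
  | monomial σ' a =>
      rw [act_monomial, MvPolynomial.coeff_monomial, MvPolynomial.coeff_monomial]
      split
      · next heq => subst heq; ring
      · simp
  | add p q ihp ihq =>
      rw [map_add, MvPolynomial.coeff_add, MvPolynomial.coeff_add, ihp, ihq]
      ring

/-- The eigenvalue of `Q_l` at `p = (u,v)`: `u` for `l = 0`, `v^{d(l)}` for `l ≥ 1`. -/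
def evk (G : GSData K) (p : K × K) (l : ℕ) : K := if l = 0 then p.1 else p.2 ^ G.d l

/-- The eigenvalue of the monomial `Pmon G e` at `p`. -/
def chi (G : GSData K) (p : K × K) (e : ℕ →₀ ℕ) : K := e.prod fun k a => evk G p k ^ a

lemma act_Q (hG : IsGenSeq ν G) (heig : ∀ l, IsEigen α β i j t x (G.Q l))
    {p : K × K} (hp : Hmem α β i j t x p) (l : ℕ) :
    act p.1 p.2 (G.Q l) = MvPolynomial.C (evk G p l) * G.Q l := by
  cases l with
  | zero =>
      rw [hG.hQ0, evk, if_pos rfl]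
      simp [act]
  | succ k =>
      obtain ⟨lam, hlam⟩ := heig (k + 1) p hp
      have h1 := congrArg (MvPolynomial.coeff (Finsupp.single 1 (G.d (k + 1)))) hlam
      rw [coeff_act, MvPolynomial.smul_eq_C_mul, MvPolynomial.coeff_C_mul,
        coeff_Q_lead ν G hG (by omega)] at h1
      have hσ0 : (Finsupp.single (1 : Fin 2) (G.d (k + 1))) 0 = 0 := by
        rw [Finsupp.single_apply]; simp
      have hσ1 : (Finsupp.single (1 : Fin 2) (G.d (k + 1))) 1 = G.d (k + 1) := by
        rw [Finsupp.single_apply]; simp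
      rw [hσ0, hσ1, pow_zero, one_mul, mul_one, mul_one] at h1
      have hev : evk G p (k + 1) = lam := by
        rw [evk, if_neg (Nat.succ_ne_zero k)]; exact h1
      rw [hlam, MvPolynomial.smul_eq_C_mul, hev]

lemma act_Pmon (hG : IsGenSeq ν G) (heig : ∀ l, IsEigen α β i j t x (G.Q l))
    {p : K × K} (hp : Hmem α β i j t x p) (e : ℕ →₀ ℕ) :
    act p.1 p.2 (Pmon G e) = MvPolynomial.C (chi G p e) * Pmon G e := by
  unfold Pmon chi
  rw [map_finsuppProd]
  calc (e.prod fun k a => act p.1 p.2 (G.Q k ^ a))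
      = e.prod fun k a => MvPolynomial.C (evk G p k ^ a) * G.Q k ^ a := by
        apply Finsupp.prod_congr
        intro k _
        rw [map_pow, act_Q ν G α β i j t x hG heig hp k, mul_pow, map_pow]
    _ = (e.prod fun k a => MvPolynomial.C (evk G p k ^ a)) * e.prod fun k a => G.Q k ^ a :=
        Finsupp.prod_mul
    _ = MvPolynomial.C (e.prod fun k a => evk G p k ^ a) * e.prod fun k a => G.Q k ^ a := by
        rw [map_finsuppProd]

lemma invariant_Pmon_iff (hG : IsGenSeq ν G) (heig : ∀ l, IsEigen α β i j t x (G.Q l))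
    (e : ℕ →₀ ℕ) :
    Invariant α β i j t x (Pmon G e) ↔
      ∀ p : K × K, Hmem α β i j t x p → chi G p e = 1 := by
  constructor
  · intro hInv p hp
    have h := hInv p hp
    rw [act_Pmon ν G α β i j t x hG heig hp e] at h
    have h2 : MvPolynomial.C (chi G p e) * Pmon G e =
        MvPolynomial.C (1 : K) * Pmon G e := by rw [map_one, one_mul]; exact h
    have h3 := mul_right_cancel₀ (Pmon_ne_zero ν G hG e) h2
    exact MvPolynomial.C_injective (Fin 2) K h3
  · intro h p hp
    rw [act_Pmon ν G α β i j t x hG heig hp e, h p hp, map_one, one_mul]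

lemma invariant_one : Invariant α β i j t x (1 : Poly K) := fun _ _ => map_one _

lemma mem_SA_iff (hdom : DominatesRm ν) (hG : IsGenSeq ν G)
    (heig : ∀ l, IsEigen α β i j t x (G.Q l)) {q : ℚ} :
    q ∈ SA ν α β i j t x ↔
      ∃ e, (∀ p : K × K, Hmem α β i j t x p → chi G p e = 1) ∧ q = evalγ ν G e := by
  constructor
  · rintro ⟨f, g, hf0, hfInv, hgInv, hg0, rfl⟩
    obtain ⟨c, ⟨hadm, hsum⟩, huniq⟩ := hG.hexpand f hf0
    obtain ⟨-, e₀, he₀, hv, -⟩ := hG.hval f hf0 c hadm hsum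
    refine ⟨e₀, ?_, by rw [vP_unit ν hdom hg0, hv]; ring⟩
    intro p hp
    set c' : (ℕ →₀ ℕ) →₀ K := Finsupp.onFinset c.support
      (fun e => c e * chi G p e)
      (fun e he => by
        by_contra hmem
        apply he
        show c e * chi G p e = 0
        rw [Finsupp.notMem_support_iff.1 hmem, zero_mul]) with hc'def
    have hsup : c'.support ⊆ c.support := Finsupp.support_onFinset_subset
    have key : f = ∑ e ∈ c.support, MvPolynomial.C (c e * chi G p e) * Pmon G e := by
      conv_lhs => rw [← hfInv p hp]
      conv_lhs => rw [hsum]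
      rw [Finsupp.sum, map_sum]
      apply Finset.sum_congr rfl
      intro e _
      rw [map_mul, act_C, act_Pmon ν G α β i j t x hG heig hp e, ← mul_assoc, ← map_mul]
    have hsum' : f = c'.sum fun e a => MvPolynomial.C a * Pmon G e := by
      rw [Finsupp.sum_of_support_subset c' hsup _ (fun e _ => by simp)]
      rw [key]
      apply Finset.sum_congr rfl
      intro e _
      rfl
    have hcc : c' = c := huniq c' ⟨fun e he => hadm e (hsup he), hsum'⟩
    have happ : c e₀ * chi G p e₀ = c e₀ := DFunLike.congr_fun hcc e₀
    have hne : c e₀ ≠ 0 := Finsupp.mem_support_iff.1 he₀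
    exact mul_left_cancel₀ hne (by rw [happ, mul_one])
  · rintro ⟨e, hchi, rfl⟩
    refine ⟨Pmon G e, 1, Pmon_ne_zero ν G hG e,
      (invariant_Pmon_iff ν G α β i j t x hG heig e).2 hchi,
      invariant_one α β i j t x, by simp, ?_⟩
    rw [vP_one, vP_Pmon ν G hG]; ring

end ActLemmas


section Numeric

variable (ν : RatVal (RF K)) (G : GSData K) (α β : K) (i j t x m n : ℕ)

lemma zpow_root_one {ζ : K} {N : ℕ} (hζ : ζ ^ N = 1) {z : ℤ} (h : (N : ℤ) ∣ z) :
    ζ ^ z = 1 := by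
  obtain ⟨w, rfl⟩ := h
  rw [zpow_mul, zpow_natCast, hζ, one_zpow]

/-- If `(m/i) ∣ e 0` and `(n/j) ∣ e k * d k` for all `k ≥ 1`, then `Pmon e` has trivial
character on `H`. -/
lemma chi_eq_one (him : i * (m / i) = m) (hjn : j * (n / j) = n)
    (hα1 : α ^ m = 1) (hβ1 : β ^ n = 1)
    {p : K × K} (hp : Hmem α β i j t x p) (e : ℕ →₀ ℕ)
    (h0 : (m / i) ∣ e 0) (hk : ∀ k, 1 ≤ k → (n / j) ∣ e k * G.d k) :
    chi G p e = 1 := by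
  obtain ⟨a, b, hab, rfl⟩ := hp
  unfold chi Finsupp.prod
  apply Finset.prod_eq_one
  intro k _
  show evk G (α ^ (a * (i : ℤ)), β ^ (b * (j : ℤ))) k ^ e k = 1
  rcases Nat.eq_zero_or_pos k with rfl | hk1
  · rw [evk, if_pos rfl]
    show (α ^ (a * (i : ℤ))) ^ e 0 = 1
    rw [← zpow_natCast (α ^ (a * (i : ℤ))), ← zpow_mul]
    apply zpow_root_one hα1
    obtain ⟨s, hs⟩ := h0
    refine ⟨a * s, ?_⟩
    have him' : ((i : ℤ)) * ((m / i : ℕ) : ℤ) = (m : ℤ) := by exact_mod_cast him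
    rw [hs, Nat.cast_mul]
    linear_combination (a * (s : ℤ)) * him'
  · rw [evk, if_neg (by omega)]
    show ((β ^ (b * (j : ℤ))) ^ G.d k) ^ e k = 1
    rw [← zpow_natCast (β ^ (b * (j : ℤ))) (G.d k), ← zpow_mul,
      ← zpow_natCast (β ^ ((b * (j : ℤ)) * (G.d k : ℤ))) (e k), ← zpow_mul]
    apply zpow_root_one hβ1
    obtain ⟨s, hs⟩ := hk k hk1
    refine ⟨b * s, ?_⟩
    have hjn' : ((j : ℤ)) * ((n / j : ℕ) : ℤ) = (n : ℤ) := by exact_mod_cast hjn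
    have hs' : ((e k : ℤ)) * ((G.d k : ℤ)) = ((n / j : ℕ) : ℤ) * (s : ℤ) := by
      exact_mod_cast congrArg (Nat.cast : ℕ → ℤ) hs
    linear_combination (b * (j : ℤ)) * hs' + (b * (s:ℤ)) * hjn'

/-- From invariance of `Pmon (single L 1)` we get `(n/j) ∣ d L`. -/
lemma dvd_of_chi_single (hβ : IsPrimitiveRoot β n) (hj : 0 < j) (hjn : j ∣ n)
    (hxt : Nat.gcd x t = 1) {L : ℕ} (hL : 1 ≤ L)
    (hinv : ∀ p : K × K, Hmem α β i j t x p → chi G p (Finsupp.single L 1) = 1) :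
    (n / j) ∣ G.d L := by
  have hcop : IsCoprime (x : ℤ) (t : ℤ) := by
    rw [Int.isCoprime_iff_gcd_eq_one, Int.gcd_natCast_natCast]
    exact hxt
  obtain ⟨u, w, huw⟩ := hcop
  have hmem : Hmem α β i j t x (α ^ (u * (i : ℤ)), β ^ ((1 : ℤ) * (j : ℤ))) := by
    refine ⟨u, 1, ?_, rfl⟩
    have : (t : ℤ) ∣ u * (x : ℤ) - 1 := ⟨-w, by linarith⟩
    exact Int.modEq_iff_dvd.2 this
  have hchi := hinv _ hmem
  unfold chi at hchi
  simp only [Finsupp.prod_single_index, pow_zero, pow_one] at hchi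
  rw [evk, if_neg (by omega)] at hchi
  -- hchi : (β ^ ((1:ℤ) * j)) ^ G.d L = 1
  have hβj : (β ^ ((1 : ℤ) * (j : ℤ))) = β ^ j := by
    rw [one_mul, zpow_natCast]
  rw [hβj, ← pow_mul] at hchi
  have hdvd : n ∣ j * G.d L := (hβ.pow_eq_one_iff_dvd _).1 hchi
  have hn' : j * (n / j) = n := Nat.mul_div_cancel' hjn
  rw [← hn'] at hdvd
  exact (mul_dvd_mul_iff_left (show j ≠ 0 by omega) :
    j * (n / j) ∣ j * G.d L ↔ (n / j) ∣ G.d L).1 hdvd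

lemma d_dvd_d (hl : 1 ≤ l0) (hk : l0 ≤ k) : G.d l0 ∣ G.d k :=
  Finset.prod_dvd_prod_of_subset _ _ _ (Finset.Icc_subset_Icc_right (by omega))

lemma eval_eq_gamma (hdom : DominatesRm ν) (hG : IsGenSeq ν G) {L : ℕ} (hL : 2 ≤ L)
    (hmb : 2 ≤ G.mbar L) {e : ℕ →₀ ℕ} (he : evalγ ν G e = G.γ ν L) :
    e = Finsupp.single L 1 := by
  have hγpos := γ_pos ν G hdom hG
  have hterm : ∀ k, (k : ℕ) ∈ e.support → (0:ℚ) ≤ (e k : ℚ) * G.γ ν k :=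
    fun k _ => mul_nonneg (by positivity) (hγpos k).le
  have hle : ∀ k ∈ e.support, (e k : ℚ) * G.γ ν k ≤ G.γ ν L := by
    intro k hk
    rw [← he]
    exact Finset.single_le_sum hterm hk
  have hover : ∀ k, L < k → e k = 0 := by
    intro k hkL
    by_contra h0
    have hks : k ∈ e.support := Finsupp.mem_support_iff.2 h0
    have h1 : (1 : ℚ) ≤ (e k : ℚ) := by exact_mod_cast Nat.one_le_iff_ne_zero.2 h0
    have h2 : G.γ ν L < G.γ ν k := γ_mono ν G hdom hG k L (by omega) hkL
    have := hle k hks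
    nlinarith [hγpos k]
  have heL : e L ≤ 1 := by
    by_contra h0
    push_neg at h0
    have hks : L ∈ e.support := Finsupp.mem_support_iff.2 (by omega)
    have h1 : (2 : ℚ) ≤ (e L : ℚ) := by exact_mod_cast h0
    have := hle L hks
    nlinarith [hγpos L]
  rcases Nat.lt_or_ge (e L) 1 with h0 | h1
  · -- e L = 0 : contradiction with minimality of mbar L
    exfalso
    have heL0 : e L = 0 := by omega
    have hsub : e.support ⊆ Finset.range L := by
      intro k hk
      rw [Finset.mem_range]
      rcases Nat.lt_or_ge k L with h | h
      · exact h
      · exfalso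
        rcases Nat.eq_or_lt_of_le h with rfl | h'
        · exact (Finsupp.mem_support_iff.1 hk) heL0
        · exact (Finsupp.mem_support_iff.1 hk) (hover k h')
    have hrange : evalγ ν G e = ∑ k ∈ Finset.range L, (e k : ℚ) * G.γ ν k :=
      Finsupp.sum_of_support_subset e hsub _ (fun k _ => by simp)
    have hmin := hG.hmbar_min L (by omega) 1 one_pos
      ⟨fun k => (e k : ℤ), by
        rw [Nat.cast_one, one_mul, ← he, hrange]
        apply Finset.sum_congr rfl
        intro k _
        norm_num⟩
    omega
  · -- e L = 1
    have heL1 : e L = 1 := by omega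
    have hLs : L ∈ e.support := Finsupp.mem_support_iff.2 (by omega)
    have hsplit : evalγ ν G e =
        (e L : ℚ) * G.γ ν L + ∑ k ∈ e.support.erase L, (e k : ℚ) * G.γ ν k := by
      rw [evalγ, Finsupp.sum, ← Finset.add_sum_erase _ _ hLs]
    have hzero : ∑ k ∈ e.support.erase L, (e k : ℚ) * G.γ ν k = 0 := by
      rw [hsplit, heL1] at he
      push_cast at he
      linarith
    have hallzero := (Finset.sum_eq_zero_iff_of_nonneg
      (fun k hk => hterm k (Finset.mem_of_mem_erase hk))).1 hzero
    ext k
    rcases eq_or_ne k L with rfl | hne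
    · rw [heL1, Finsupp.single_eq_same]
    · rw [Finsupp.single_eq_of_ne' (Ne.symm hne)]
      by_contra h0
      have hks : k ∈ e.support.erase L :=
        Finset.mem_erase.2 ⟨hne, Finsupp.mem_support_iff.2 h0⟩
      have := hallzero k hks
      have : (e k : ℚ) = 0 := by
        rcases mul_eq_zero.1 this with h | h
        · exact h
        · exact absurd h (hγpos k).ne'
      exact h0 (by exact_mod_cast this)

end Numeric

section Inf

variable (ν : RatVal (RF K)) (G : GSData K)

lemma exists_big_mbar (hdom : DominatesRm ν) (hG : IsGenSeq ν G) (hnd : Nondiscrete ν) :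
    ∀ N : ℕ, ∃ L, N ≤ L ∧ 2 ≤ L ∧ 2 ≤ G.mbar L := by
  by_contra hcon
  push_neg at hcon
  obtain ⟨N, hN⟩ := hcon
  set M := max N 2 with hM
  set g : AddSubgroup ℚ := AddSubgroup.closure ((fun k => G.γ ν k) '' (Set.Iio M)) with hgdef
  have hγmem : ∀ l, G.γ ν l ∈ g := by
    intro l
    induction l using Nat.strong_induction_on with
    | _ l ih =>
      by_cases hl : l < M
      · exact AddSubgroup.subset_closure ⟨l, hl, rfl⟩
      · push_neg at hl
        have h2l : 2 ≤ l := le_trans (le_max_right N 2) hl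
        have hm1 : G.mbar l = 1 := by
          have h1 := hN l (le_trans (le_max_left N 2) hl) h2l
          have h2 := hG.hmbar_pos l (by omega)
          omega
        obtain ⟨c, hc⟩ := hG.hmbar_mem l (by omega)
        rw [hm1, Nat.cast_one, one_mul] at hc
        rw [hc]
        apply AddSubgroup.sum_mem
        intro k hk
        have hz : (c k : ℚ) * G.γ ν k = (c k) • G.γ ν k := (zsmul_eq_mul _ _).symm
        rw [hz]
        exact AddSubgroup.zsmul_mem _ (ih k (Finset.mem_range.1 hk)) _
  have hvals : ∀ f : Poly K, f ≠ 0 → vP ν f ∈ g := by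
    intro f hf
    obtain ⟨e, he⟩ := vP_eq_evalγ ν G hG hf
    rw [he, evalγ, Finsupp.sum]
    apply AddSubgroup.sum_mem
    intro k _
    have hz : ((e k : ℚ)) * G.γ ν k = (e k) • G.γ ν k := (nsmul_eq_mul _ _).symm
    rw [hz]
    exact AddSubgroup.nsmul_mem _ (hγmem k) _
  set D : ℕ := ∏ k ∈ Finset.range M, (G.γ ν k).den with hD
  have hDpos : 0 < D := Finset.prod_pos fun k _ => (G.γ ν k).pos
  have hint : ∀ q ∈ g, ∃ z : ℤ, q * D = z := by
    intro q hq
    refine AddSubgroup.closure_induction ?_ ?_ ?_ ?_ hq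
    · rintro q' ⟨k, hk, rfl⟩
      have hdvd : ((G.γ ν k).den : ℕ) ∣ D :=
        Finset.dvd_prod_of_mem _ (Finset.mem_range.2 hk)
      obtain ⟨cc, hcc⟩ := hdvd
      refine ⟨(G.γ ν k).num * cc, ?_⟩
      rw [hcc]
      push_cast
      rw [← mul_assoc, Rat.mul_den_eq_num]
    · exact ⟨0, by simp⟩
    · rintro q1 q2 - - ⟨z1, h1⟩ ⟨z2, h2⟩
      exact ⟨z1 + z2, by push_cast; rw [add_mul, h1, h2]⟩
    · rintro q1 - ⟨z1, h1⟩
      exact ⟨-z1, by push_cast; rw [neg_mul, h1]⟩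
  apply hnd
  refine ⟨(D : ℚ)⁻¹, ?_⟩
  intro z hz
  obtain ⟨fp, gp, hgp, hfg⟩ := IsFractionRing.div_surjective (A := Poly K) z
  have hgne : gp ≠ 0 := nonZeroDivisors.ne_zero hgp
  have hfne : fp ≠ 0 := by
    intro h; apply hz; rw [← hfg, h, map_zero, zero_div]
  have hzz : z * algebraMap (Poly K) (RF K) gp = algebraMap (Poly K) (RF K) fp := by
    rw [← hfg, div_mul_cancel₀ _ (algMap_ne hgne)]
  have hv : ν.v z = vP ν fp - vP ν gp := by
    have hm := ν.v_mul z _ hz (algMap_ne hgne)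
    rw [hzz] at hm
    have hm' : vP ν fp = ν.v z + vP ν gp := hm
    linarith
  obtain ⟨z1, h1⟩ := hint _ (hvals fp hfne)
  obtain ⟨z2, h2⟩ := hint _ (hvals gp hgne)
  refine ⟨z1 - z2, ?_⟩
  have hDne : (D : ℚ) ≠ 0 := by exact_mod_cast hDpos.ne'
  have hkey : ν.v z * D = ((z1 - z2 : ℤ) : ℚ) := by
    rw [hv]
    push_cast
    rw [sub_mul, h1, h2]
  calc ν.v z = ν.v z * D * (D : ℚ)⁻¹ := by field_simp
    _ = ((z1 - z2 : ℤ) : ℚ) * (D : ℚ)⁻¹ := by rw [hkey]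

end Inf

section Decomp

variable (ν : RatVal (RF K)) (G : GSData K)

/-- Truncation of a function to a finitely supported function on `[0, l0)`. -/
def cut (φ : ℕ → ℕ) (l0 : ℕ) : ℕ →₀ ℕ :=
  Finsupp.onFinset (Finset.range l0) (fun k => if k < l0 then φ k else 0)
    (fun k hk => by
      rw [Finset.mem_range]
      by_contra h
      exact hk (if_neg h))

lemma evalγ_cut (φ : ℕ → ℕ) (l0 : ℕ) :
    evalγ ν G (cut φ l0) = ∑ k ∈ Finset.range l0, (φ k : ℚ) * G.γ ν k := by
  rw [evalγ, Finsupp.sum_of_support_subset (cut φ l0)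
    (show (cut φ l0).support ⊆ Finset.range l0 from Finsupp.support_onFinset_subset) _
    (fun k _ => by simp)]
  apply Finset.sum_congr rfl
  intro k hk
  show ((if k < l0 then φ k else 0 : ℕ) : ℚ) * G.γ ν k = _
  rw [if_pos (Finset.mem_range.1 hk)]

end Decomp

lemma key1 {m n : ℕ} (hm : 0 < m) (hn : 0 < n) (α β : K)
    (hα : IsPrimitiveRoot α m) (hβ : IsPrimitiveRoot β n)
    {i j t x : ℕ} (hi : 0 < i) (hj : 0 < j) (him : i ∣ m) (hjn : j ∣ n)
    (ν : RatVal (RF K)) (hdom : DominatesRm ν) (G : GSData K) (hG : IsGenSeq ν G)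
    (heig : ∀ l, IsEigen α β i j t x (G.Q l))
    (l0 : ℕ) (hl0 : 2 ≤ l0) (hdl0 : (n / j) ∣ G.d l0) :
    FGover (SRm ν) (SA ν α β i j t x) := by
  have hm' : 0 < m / i := Nat.div_pos (Nat.le_of_dvd hm him) hi
  have hn' : 0 < n / j := Nat.div_pos (Nat.le_of_dvd hn hjn) hj
  have himc : i * (m / i) = m := Nat.mul_div_cancel' him
  have hjnc : j * (n / j) = n := Nat.mul_div_cancel' hjn
  have hα1 : α ^ m = 1 := hα.pow_eq_one
  have hβ1 : β ^ n = 1 := hβ.pow_eq_one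
  classical
  set F : Finset ℚ := Finset.image
    (fun r : Fin l0 → Fin (m / i + n / j) =>
      ∑ k : Fin l0, ((r k : ℕ) : ℚ) * G.γ ν (k : ℕ)) Finset.univ with hF
  -- each element of F is in SRm
  have hFmem : ∀ q ∈ F, ∃ φ : ℕ → ℕ, q = evalγ ν G (cut φ l0) := by
    intro q hq
    obtain ⟨r, -, rfl⟩ := Finset.mem_image.1 hq
    refine ⟨fun k => if h : k < l0 then (r ⟨k, h⟩ : ℕ) else 0, ?_⟩
    rw [evalγ_cut, ← Fin.sum_univ_eq_sum_range
      (fun k => (((if h : k < l0 then (r ⟨k, h⟩ : ℕ) else 0) : ℕ) : ℚ) * G.γ ν k) l0]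
    apply Finset.sum_congr rfl
    intro k _
    rw [dif_pos k.isLt]
  have hFS : (F : Set ℚ) ⊆ SRm ν := by
    intro q hq
    obtain ⟨φ, rfl⟩ := hFmem q hq
    exact (mem_SRm_iff ν G hdom hG).2 ⟨cut φ l0, rfl⟩
  refine ⟨F, hFS, ?_⟩
  ext q
  constructor
  · intro hq
    obtain ⟨e, rfl⟩ := (mem_SRm_iff ν G hdom hG).1 hq
    -- decompose e
    set rφ : ℕ → ℕ := fun k => if k = 0 then e 0 % (m / i) else e k % (n / j) with hrφ
    set e'' : ℕ →₀ ℕ := Finsupp.onFinset e.support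
      (fun k => if k = 0 then (m / i) * (e 0 / (m / i))
        else if k < l0 then (n / j) * (e k / (n / j)) else e k)
      (fun k hk => by
        rw [Finsupp.mem_support_iff]
        intro h0
        apply hk
        show (if k = 0 then (m / i) * (e 0 / (m / i))
          else if k < l0 then (n / j) * (e k / (n / j)) else e k) = 0
        rcases eq_or_ne k 0 with rfl | hne
        · rw [if_pos rfl, h0, Nat.zero_div, mul_zero]
        · rw [if_neg hne]
          split_ifs
          · rw [h0, Nat.zero_div, mul_zero]
          · exact h0) with he''
    have hdecomp : e = cut rφ l0 + e'' := by
      ext k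
      rw [Finsupp.add_apply]
      show e k = (if k < l0 then (if k = 0 then e 0 % (m / i) else e k % (n / j)) else 0)
        + (if k = 0 then (m / i) * (e 0 / (m / i))
            else if k < l0 then (n / j) * (e k / (n / j)) else e k)
      rcases eq_or_ne k 0 with rfl | hk0
      · rw [if_pos (by omega), if_pos rfl, if_pos rfl, Nat.mod_add_div]
      · rw [if_neg hk0, if_neg hk0]
        by_cases hkl : k < l0
        · rw [if_pos hkl, if_pos hkl, Nat.mod_add_div]
        · rw [if_neg hkl, if_neg hkl, zero_add]
    have h0 : (m / i) ∣ e'' 0 := by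
      show (m / i) ∣ (if (0 : ℕ) = 0 then (m / i) * (e 0 / (m / i))
        else if (0 : ℕ) < l0 then (n / j) * (e 0 / (n / j)) else e 0)
      rw [if_pos rfl]
      exact dvd_mul_right _ _
    have hk : ∀ k, 1 ≤ k → (n / j) ∣ e'' k * G.d k := by
      intro k hk1
      show (n / j) ∣ (if k = 0 then (m / i) * (e 0 / (m / i))
        else if k < l0 then (n / j) * (e k / (n / j)) else e k) * G.d k
      rw [if_neg (by omega)]
      by_cases hkl : k < l0
      · rw [if_pos hkl]
        exact Dvd.dvd.mul_right (dvd_mul_right _ _) _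
      · rw [if_neg hkl]
        exact Dvd.dvd.mul_left (hdl0.trans (d_dvd_d G (by omega) (by omega))) _
    have hinv : ∀ p : K × K, Hmem α β i j t x p → chi G p e'' = 1 :=
      fun p hp => chi_eq_one G α β i j t x m n himc hjnc hα1 hβ1 hp e'' h0 hk
    rw [Set.mem_add]
    refine ⟨∑ k ∈ Finset.range l0, (rφ k : ℚ) * G.γ ν k, ?_, evalγ ν G e'', ?_, ?_⟩
    · -- membership in F
      rw [hF]
      simp only [Finset.coe_image, Set.mem_image, Finset.mem_coe]
      refine ⟨fun k => ⟨rφ (k : ℕ), ?_⟩, by simp, ?_⟩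
      · show (if (k : ℕ) = 0 then e 0 % (m / i) else e (k : ℕ) % (n / j)) < m / i + n / j
        split_ifs
        · have := Nat.mod_lt (e 0) hm'
          omega
        · have := Nat.mod_lt (e (k : ℕ)) hn'
          omega
      · exact Fin.sum_univ_eq_sum_range (fun k => ((rφ k : ℚ)) * G.γ ν k) l0
    · exact (mem_SA_iff ν G α β i j t x hdom hG heig).2 ⟨e'', hinv, rfl⟩
    · rw [← evalγ_cut ν G rφ l0, ← evalγ_add, ← hdecomp]
  · intro hq
    rw [Set.mem_add] at hq
    obtain ⟨qf, hqf, τ, hτ, rfl⟩ := hq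
    obtain ⟨φ, rfl⟩ := hFmem qf hqf
    obtain ⟨eτ, -, rfl⟩ := (mem_SA_iff ν G α β i j t x hdom hG heig).1 hτ
    rw [← evalγ_add]
    exact (mem_SRm_iff ν G hdom hG).2 ⟨_, rfl⟩


lemma key2 {n : ℕ} (hn : 0 < n) (α β : K) (hβ : IsPrimitiveRoot β n)
    {i j t x : ℕ} (hj : 0 < j) (hjn : j ∣ n) (hxt : Nat.gcd x t = 1)
    (ν : RatVal (RF K)) (hdom : DominatesRm ν) (hnd : Nondiscrete ν)
    (G : GSData K) (hG : IsGenSeq ν G)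
    (heig : ∀ l, IsEigen α β i j t x (G.Q l))
    (hall : ∀ l, 2 ≤ l → ¬ (n / j) ∣ G.d l) :
    ¬ FGover (SRm ν) (SA ν α β i j t x) := by
  rintro ⟨F, hFS, hEq⟩
  have hbig := exists_big_mbar ν G hdom hG hnd
  have hmem : ∀ L, 2 ≤ L → 2 ≤ G.mbar L → G.γ ν L ∈ (F : Set ℚ) := by
    intro L hL hmb
    have hγS : G.γ ν L ∈ SRm ν := (mem_SRm_iff ν G hdom hG).2
      ⟨Finsupp.single L 1, by rw [evalγ_single]; push_cast; ring⟩
    rw [hEq] at hγS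
    obtain ⟨qf, hqf, τ, hτ, hsum⟩ := Set.mem_add.1 hγS
    obtain ⟨ef, hef⟩ := (mem_SRm_iff ν G hdom hG).1 (hFS hqf)
    obtain ⟨eτ, hτinv, hτval⟩ := (mem_SA_iff ν G α β i j t x hdom hG heig).1 hτ
    have htot : evalγ ν G (ef + eτ) = G.γ ν L := by
      rw [evalγ_add, ← hef, ← hτval, hsum]
    have hrep := eval_eq_gamma ν G hdom hG hL hmb htot
    have happ : ∀ k, ef k + eτ k = (Finsupp.single L 1 : ℕ →₀ ℕ) k := by
      intro k
      rw [← Finsupp.add_apply, hrep]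
    have hL1 : ef L + eτ L = 1 := by
      have := happ L
      rwa [Finsupp.single_eq_same] at this
    rcases (show eτ L = 1 ∨ eτ L = 0 by omega) with h1 | h0
    · exfalso
      have heτ : eτ = Finsupp.single L 1 := by
        ext k
        have hk := happ k
        rcases eq_or_ne k L with rfl | hne
        · rw [Finsupp.single_eq_same] at hk ⊢
          omega
        · rw [Finsupp.single_eq_of_ne' (Ne.symm hne)] at hk ⊢
          omega
      rw [heτ] at hτinv
      exact hall L hL (dvd_of_chi_single G α β i j t x n hβ hj hjn hxt
        (show 1 ≤ L by omega) hτinv)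
    · have hef' : ef = Finsupp.single L 1 := by
        ext k
        have hk := happ k
        rcases eq_or_ne k L with rfl | hne
        · rw [Finsupp.single_eq_same] at hk ⊢
          omega
        · rw [Finsupp.single_eq_of_ne' (Ne.symm hne)] at hk ⊢
          omega
      have hqfval : qf = G.γ ν L := by
        rw [hef, hef', evalγ_single]
        push_cast
        ring
      rw [← hqfval]
      exact hqf
  -- construct an infinite family inside the finite set F
  classical
  set seq : ℕ → ℕ := fun k => Nat.rec (Classical.choose (hbig 0))
    (fun _ prev => Classical.choose (hbig (prev + 1))) k with hseqdef
  have hseq0 : ∀ k, 2 ≤ seq k ∧ 2 ≤ G.mbar (seq k) := by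
    intro k
    cases k with
    | zero =>
        have hs := Classical.choose_spec (hbig 0)
        exact ⟨hs.2.1, hs.2.2⟩
    | succ p =>
        have hs := Classical.choose_spec (hbig (seq p + 1))
        exact ⟨hs.2.1, hs.2.2⟩
  have hseqlt : ∀ k, seq k < seq (k + 1) := by
    intro k
    have hs := Classical.choose_spec (hbig (seq k + 1))
    have : seq k + 1 ≤ seq (k + 1) := hs.1
    omega
  have hseqmono : StrictMono seq := strictMono_nat_of_lt_succ hseqlt
  have hinj : Function.Injective (fun k => G.γ ν (seq k)) := by
    intro a b hab
    by_contra hne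
    rcases Nat.lt_or_ge a b with h | h
    · have := γ_mono ν G hdom hG (seq b) (seq a) (by have := (hseq0 a).1; omega)
        (hseqmono h)
      simp only at hab
      linarith [hab.le, hab.ge, this]
    · have h' : b < a := by omega
      have := γ_mono ν G hdom hG (seq a) (seq b) (by have := (hseq0 b).1; omega)
        (hseqmono h')
      simp only at hab
      linarith
  have hrange : Set.range (fun k => G.γ ν (seq k)) ⊆ (F : Set ℚ) := by
    rintro q ⟨k, rfl⟩
    exact hmem (seq k) (hseq0 k).1 (hseq0 k).2
  exact (F.finite_toSet).not_infinite
    ((Set.infinite_range_of_injective hinj).mono hrange)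


/-- non-finite generation iff `j ≠ n` and `(n/j) ∤ d(l)` for all `l ≥ 2`. -/
theorem stmt_8 (K : Type) [Field K] [IsAlgClosed K] [CharZero K]
    (m n : ℕ) (hm : 0 < m) (hn : 0 < n) (α β : K)
    (hα : IsPrimitiveRoot α m) (hβ : IsPrimitiveRoot β n)
    (i j t x : ℕ) (hi : 0 < i) (hj : 0 < j) (ht : 0 < t)
    (him : i ∣ m) (hjn : j ∣ n) (hti : t ∣ m / i) (htj : t ∣ n / j)
    (hxt : Nat.gcd x t = 1) (hx1 : 1 ≤ x) (hxle : x ≤ t)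
    (ν : RatVal (RF K)) (hdom : DominatesRm ν) (hnd : Nondiscrete ν)
    (G : GSData K) (hG : IsGenSeq ν G)
    (heig : ∀ l, IsEigen α β i j t x (G.Q l)) :
    ¬ FGover (SRm ν) (SA ν α β i j t x) ↔
      (j ≠ n ∧ ∀ l, 2 ≤ l → ¬ (n / j) ∣ G.d l) := by
  constructor
  · intro hnfg
    constructor
    · intro hjeq
      apply hnfg
      apply key1 hm hn α β hα hβ hi hj him hjn ν hdom G hG heig 2 le_rfl
      rw [hjeq, Nat.div_self hn]
      exact one_dvd _
    · intro l hl hdvd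
      exact hnfg (key1 hm hn α β hα hβ hi hj him hjn ν hdom G hG heig l hl hdvd)
  · rintro ⟨-, hall⟩
    exact key2 hn α β hβ hj hjn hxt ν hdom hnd G hG heig hall

end DuttaPaper
end
end

section
/- Suppose gcd(m/i, n/j) > t ≥ 1. If ν is a rational rank 1 non-discrete valuation dominating R_𝔪 with a generating sequence Q_0 = X, Q_1 = Y, Q_2, …, then the sequence {Q_l}_{l ≥ 0} is not a sequence of eigenfunctions for H_{i,j,t,x}; in fact Q_2 is not an eigenfunction for H_{i,j,t,x}. -/
open MvPolynomial Finset Pointwise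

noncomputable section

namespace DuttaPaper

variable {K : Type} [Field K]

lemma eigen_extract (u v lam lamQ : K) (r s : ℕ) (hr : 0 < r) (hs : 0 < s) (hlam : lam ≠ 0)
    (h : act u v (X 1 ^ s - C lam * X 0 ^ r) = lamQ • (X 1 ^ s - C lam * X 0 ^ r)) :
    v ^ s = lamQ ∧ u ^ r = lamQ := by
  simp only [act, map_sub, map_pow, map_mul, aeval_X, aeval_C,
    Matrix.cons_val_zero, Matrix.cons_val_one, Matrix.head_cons,
    MvPolynomial.smul_eq_C_mul, mul_pow, MvPolynomial.algebraMap_eq] at h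
  simp only [← C_pow] at h
  have hne : (Finsupp.single (0 : Fin 2) r) ≠ (Finsupp.single (1 : Fin 2) s) := by
    simp [Finsupp.single_eq_single_iff, hr.ne', hs.ne']
  have h1 := congrArg (MvPolynomial.coeff (Finsupp.single (1 : Fin 2) s)) h
  have h2 := congrArg (MvPolynomial.coeff (Finsupp.single (0 : Fin 2) r)) h
  simp only [coeff_sub, ← C_pow, coeff_C_mul, coeff_X_pow] at h1 h2
  simp only [if_true, if_pos rfl, if_neg hne, if_neg (Ne.symm hne), mul_one, mul_zero,
    sub_zero, zero_sub, neg_neg, neg_eq_iff_eq_neg, neg_mul, neg_sub] at h1 h2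
  refine ⟨h1, ?_⟩
  have h3 : lam * u ^ r = lam * lamQ := by linear_combination h2
  exact mul_left_cancel₀ hlam h3

theorem stmt_9' (K : Type) [Field K] [IsAlgClosed K] [CharZero K]
    (m n : ℕ) (hm : 0 < m) (hn : 0 < n) (α β : K)
    (hα : IsPrimitiveRoot α m) (hβ : IsPrimitiveRoot β n)
    (i j t x : ℕ) (hi : 0 < i) (hj : 0 < j) (ht : 0 < t)
    (him : i ∣ m) (hjn : j ∣ n) (hti : t ∣ m / i) (htj : t ∣ n / j)
    (hxt : Nat.gcd x t = 1) (hx1 : 1 ≤ x) (hxle : x ≤ t)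
    (ν : RatVal (RF K)) (hdom : DominatesRm ν) (hnd : Nondiscrete ν)
    (G : GSData K) (hG : IsGenSeq ν G)
    (hgt : t < Nat.gcd (m / i) (n / j)) :
    ¬ IsEigen α β i j t x (G.Q 2) := by
  obtain ⟨lam, hlam, cc, hcclt, hQ2, hsum⟩ := hG.hrec 1 le_rfl
  set s := G.mbar 1 with hsdef
  set r := cc 0 with hrdef
  have hQ2' : G.Q 2 = X 1 ^ s - C lam * X 0 ^ r := by
    rw [hQ2, hG.hQ1, Finset.prod_range_one, hG.hQ0]
  have hsum' : (s : ℚ) * G.γ ν 1 = (r : ℚ) * G.γ ν 0 := by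
    rw [hsum, Finset.sum_range_one]
  have hγ0 : 0 < G.γ ν 0 := by
    have : G.Q 0 ≠ 0 := by rw [hG.hQ0]; exact MvPolynomial.X_ne_zero 0
    exact hdom.2 _ this (by rw [hG.hQ0]; simp)
  have hγ1 : 0 < G.γ ν 1 := by
    have : G.Q 1 ≠ 0 := by rw [hG.hQ1]; exact MvPolynomial.X_ne_zero 1
    exact hdom.2 _ this (by rw [hG.hQ1]; simp)
  have hs : 0 < s := hG.hmbar_pos 1 le_rfl
  have hr : 0 < r := by
    rcases Nat.eq_zero_or_pos r with h0 | h
    · exfalso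
      have : (0:ℚ) < (s:ℚ) * G.γ ν 1 := mul_pos (by exact_mod_cast hs) hγ1
      rw [hsum', h0] at this; simp at this
    · exact h
  have hcop : Nat.gcd r s = 1 := by
    set d := Nat.gcd r s with hd
    have hdr : d ∣ r := Nat.gcd_dvd_left r s
    have hds : d ∣ s := Nat.gcd_dvd_right r s
    have hdpos : 0 < d := Nat.gcd_pos_of_pos_left _ hr
    have hkey : ((s / d : ℕ) : ℚ) * G.γ ν 1 = ((r / d : ℕ) : ℚ) * G.γ ν 0 := by
      have hds' : d * (s / d) = s := Nat.mul_div_cancel' hds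
      have hdr' : d * (r / d) = r := Nat.mul_div_cancel' hdr
      have hq : (d:ℚ) * (((s / d : ℕ):ℚ) * G.γ ν 1) = (d:ℚ) * (((r / d : ℕ):ℚ) * G.γ ν 0) := by
        rw [← mul_assoc, ← mul_assoc]
        rw [show ((d:ℚ) * ((s/d : ℕ):ℚ)) = ((s:ℚ)) by exact_mod_cast congrArg (Nat.cast (R := ℚ)) hds']
        rw [show ((d:ℚ) * ((r/d : ℕ):ℚ)) = ((r:ℚ)) by exact_mod_cast congrArg (Nat.cast (R := ℚ)) hdr']
        exact hsum'
      exact mul_left_cancel₀ (by exact_mod_cast hdpos.ne') hq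
    have hmin := hG.hmbar_min 1 le_rfl (s / d) (Nat.div_pos (Nat.le_of_dvd hs hds) hdpos)
      ⟨fun _ => ((r / d : ℕ) : ℤ), by rw [Finset.sum_range_one]; push_cast; exact hkey⟩
    have : d * s ≤ d * (s / d) := Nat.mul_le_mul_left d hmin
    rw [Nat.mul_div_cancel' hds] at this
    have hd1 : d ≤ 1 := by
      by_contra hc
      push_neg at hc
      nlinarith
    omega
  intro heig
  -- first group element : a = 0, b = t
  obtain ⟨lamQ, hlamQ⟩ := heig ((α ^ ((0:ℤ) * (i:ℤ)), β ^ ((t:ℤ) * (j:ℤ))))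
    ⟨0, t, by simpa using (Int.modEq_zero_iff_dvd).mpr (dvd_refl (t:ℤ)), rfl⟩
  rw [hQ2'] at hlamQ
  obtain ⟨e1, e2⟩ := eigen_extract _ _ lam lamQ r s hr hs hlam hlamQ
  have hone : (α ^ ((0:ℤ) * (i:ℤ))) ^ r = 1 := by norm_num
  have hb1 : (β ^ ((t:ℤ) * (j:ℤ))) ^ s = 1 := by rw [e1, ← e2, hone]
  have hb2 : β ^ (t * j * s) = 1 := by
    have hcast : β ^ ((t:ℤ) * (j:ℤ)) = β ^ (t * j) := by norm_cast
    rw [hcast, ← pow_mul] at hb1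
    exact hb1
  have hNdvd : n ∣ t * j * s := hβ.pow_eq_one_iff_dvd _ |>.mp hb2
  -- second group element : a = t, b = 0
  obtain ⟨lamQ', hlamQ'⟩ := heig ((α ^ ((t:ℤ) * (i:ℤ)), β ^ ((0:ℤ) * (j:ℤ))))
    ⟨t, 0, ((Int.modEq_zero_iff_dvd).mpr ⟨(x:ℤ), rfl⟩).symm, rfl⟩
  rw [hQ2'] at hlamQ'
  obtain ⟨e1', e2'⟩ := eigen_extract _ _ lam lamQ' r s hr hs hlam hlamQ'
  have hone' : (β ^ ((0:ℤ) * (j:ℤ))) ^ s = 1 := by norm_num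
  have ha1 : (α ^ ((t:ℤ) * (i:ℤ))) ^ r = 1 := by rw [e2', ← e1', hone']
  have ha2 : α ^ (t * i * r) = 1 := by
    have hcast : α ^ ((t:ℤ) * (i:ℤ)) = α ^ (t * i) := by norm_cast
    rw [hcast, ← pow_mul] at ha1
    exact ha1
  have hMdvd : m ∣ t * i * r := hα.pow_eq_one_iff_dvd _ |>.mp ha2
  -- extract divisibilities
  have hM : (m / i) ∣ t * r := by
    have h1 : i * (m / i) ∣ i * (t * r) := by
      rw [Nat.mul_div_cancel' him]
      calc m ∣ t * i * r := hMdvd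
        _ = i * (t * r) := by ring
    exact (Nat.mul_dvd_mul_iff_left hi).mp h1
  have hN : (n / j) ∣ t * s := by
    have h1 : j * (n / j) ∣ j * (t * s) := by
      rw [Nat.mul_div_cancel' hjn]
      calc n ∣ t * j * s := hNdvd
        _ = j * (t * s) := by ring
    exact (Nat.mul_dvd_mul_iff_left hj).mp h1
  have hfin : Nat.gcd (m / i) (n / j) ∣ t := by
    have h2 : Nat.gcd (m / i) (n / j) ∣ Nat.gcd (t * r) (t * s) :=
      Nat.dvd_gcd (dvd_trans (Nat.gcd_dvd_left _ _) hM) (dvd_trans (Nat.gcd_dvd_right _ _) hN)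
    rwa [Nat.gcd_mul_left, hcop, mul_one] at h2
  have := Nat.le_of_dvd ht hfin
  omega

/-- if `gcd(m/i, n/j) > t`, no generating sequence consists of
eigenfunctions; in fact `Q_2` is not an eigenfunction. -/
theorem stmt_9 (K : Type) [Field K] [IsAlgClosed K] [CharZero K]
    (m n : ℕ) (hm : 0 < m) (hn : 0 < n) (α β : K)
    (hα : IsPrimitiveRoot α m) (hβ : IsPrimitiveRoot β n)
    (i j t x : ℕ) (hi : 0 < i) (hj : 0 < j) (ht : 0 < t)
    (him : i ∣ m) (hjn : j ∣ n) (hti : t ∣ m / i) (htj : t ∣ n / j)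
    (hxt : Nat.gcd x t = 1) (hx1 : 1 ≤ x) (hxle : x ≤ t)
    (ν : RatVal (RF K)) (hdom : DominatesRm ν) (hnd : Nondiscrete ν)
    (G : GSData K) (hG : IsGenSeq ν G)
    (hgt : t < Nat.gcd (m / i) (n / j)) :
    ¬ IsEigen α β i j t x (G.Q 2) ∧ ¬ (∀ l, IsEigen α β i j t x (G.Q l)) := by
  have key := stmt_9' K m n hm hn α β hα hβ i j t x hi hj ht him hjn hti htj hxt hx1 hxle
    ν hdom hnd G hG hgt
  exact ⟨key, fun hall => key (hall 2)⟩

end DuttaPaper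
end
end

section
/- Let (β_l)_{l ≥ 0} be a sequence of positive rational numbers such that, setting n̄_l = min{ q ∈ ℤ_{>0} : q β_l ∈ Σ_{k<l} β_k ℤ } for l ≥ 1, one has n̄_l > 1 for all l ≥ 1 and β_{l+1} > n̄_l β_l for all l ≥ 1. If d ≥ 1 and β_d = l β_0 + j_1 β_1 + ⋯ + j_r β_r with l, j_1, …, j_r ∈ ℕ and j_r ≠ 0, then r = d, j_d = 1, l = 0 and j_k = 0 for all k ≠ d. -/
open MvPolynomial Finset Pointwise

noncomputable section

namespace DuttaPaper

variable {K : Type} [Field K]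

/-- minimal generating relations in the semigroup generated by a sequence
`(β_l)` of positive rationals with `n̄_l > 1` and `β_{l+1} > n̄_l β_l` for `l ≥ 1`. -/
theorem stmt_17 (b : ℕ → ℚ) (hpos : ∀ l, 0 < b l) (nbar : ℕ → ℕ)
    (hmem : ∀ l, 1 ≤ l → ∃ c : ℕ → ℤ,
      (nbar l : ℚ) * b l = ∑ k ∈ Finset.range l, (c k : ℚ) * b k)
    (hmin : ∀ l, 1 ≤ l → ∀ q : ℕ, 0 < q →
      (∃ c : ℕ → ℤ, (q : ℚ) * b l = ∑ k ∈ Finset.range l, (c k : ℚ) * b k) → nbar l ≤ q)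
    (hgt1 : ∀ l, 1 ≤ l → 1 < nbar l)
    (hgrow : ∀ l, 1 ≤ l → (nbar l : ℚ) * b l < b (l + 1))
    (d : ℕ) (hd : 1 ≤ d) (l r : ℕ) (hr : 1 ≤ r) (jj : ℕ → ℕ) (hjr : jj r ≠ 0)
    (heq : b d = (l : ℚ) * b 0 + ∑ k ∈ Finset.Icc 1 r, (jj k : ℚ) * b k) :
    r = d ∧ jj d = 1 ∧ l = 0 ∧ ∀ k, 1 ≤ k → k ≤ r → k ≠ d → jj k = 0 := by
  have hstep : ∀ k, 1 ≤ k → b k < b (k + 1) := by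
    intro k hk
    have h1 := hgrow k hk
    have h2 : (2 : ℚ) ≤ (nbar k : ℚ) := by exact_mod_cast hgt1 k hk
    nlinarith [hpos k]
  have hmono : ∀ m n : ℕ, 1 ≤ m → m < n → b m < b n := by
    intro m n hm hmn
    induction n with
    | zero => omega
    | succ n ih =>
      rcases Nat.lt_succ_iff_lt_or_eq.mp hmn with h | h
      · exact (ih h).trans (hstep n (by omega))
      · subst h; exact hstep m hm
  have hterm : ∀ k, (0 : ℚ) ≤ (jj k : ℚ) * b k := fun k =>
    mul_nonneg (by positivity) (hpos k).le
  have hlb0 : (0 : ℚ) ≤ (l : ℚ) * b 0 := mul_nonneg (by positivity) (hpos 0).le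
  have hrd : r = d := by
    by_contra hne
    rcases lt_or_gt_of_ne hne with hlt | hgt
    · -- r < d : contradicts minimality of nbar d
      have h1 : nbar d ≤ 1 := by
        apply hmin d hd 1 one_pos
        refine ⟨fun k => if k = 0 then (l : ℤ) else if k ≤ r then (jj k : ℤ) else 0, ?_⟩
        have hsplit : Finset.range d = insert 0 (Finset.Icc 1 (d - 1)) := by
          ext k
          simp only [Finset.mem_range, Finset.mem_insert, Finset.mem_Icc]
          omega
        rw [Nat.cast_one, one_mul, heq, hsplit, Finset.sum_insert (by simp)]
        simp only [if_pos rfl]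
        congr 1
        rw [← Finset.sum_subset (Finset.Icc_subset_Icc_right (by omega) :
            Finset.Icc 1 r ⊆ Finset.Icc 1 (d - 1))]
        · apply Finset.sum_congr rfl
          intro k hk
          simp only [Finset.mem_Icc] at hk
          rw [if_neg (by omega), if_pos hk.2]
          push_cast
          ring
        · intro k hk hk'
          simp only [Finset.mem_Icc] at hk hk'
          rw [if_neg (by omega), if_neg (by omega)]
          simp
      have := hgt1 d hd
      omega
    · -- r > d : the RHS is too big
      have h1 : (jj r : ℚ) * b r ≤ ∑ k ∈ Finset.Icc 1 r, (jj k : ℚ) * b k :=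
        Finset.single_le_sum (fun k _ => hterm k) (Finset.mem_Icc.mpr ⟨hr, le_refl r⟩)
      have h2 : b r ≤ (jj r : ℚ) * b r := by
        have : (1 : ℚ) ≤ (jj r : ℚ) := by exact_mod_cast Nat.one_le_iff_ne_zero.mpr hjr
        nlinarith [hpos r]
      have h3 : b d < b r := hmono d r hd hgt
      linarith
  subst hrd
  have hsplit : Finset.Icc 1 r = insert r (Finset.Icc 1 (r - 1)) := by
    ext k
    simp only [Finset.mem_insert, Finset.mem_Icc]
    omega
  rw [hsplit, Finset.sum_insert (by simp only [Finset.mem_Icc]; omega)] at heq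
  set S : ℚ := ∑ k ∈ Finset.Icc 1 (r - 1), (jj k : ℚ) * b k with hS
  have hSnn : 0 ≤ S := Finset.sum_nonneg fun k _ => hterm k
  have hjj1 : jj r = 1 := by
    by_contra h
    have h2 : 2 ≤ jj r := by omega
    have : (2 : ℚ) ≤ (jj r : ℚ) := by exact_mod_cast h2
    nlinarith [hpos r]
  rw [hjj1] at heq
  push_cast at heq
  have hzero : (l : ℚ) * b 0 + S = 0 := by linarith
  have hl0 : (l : ℚ) * b 0 = 0 := by linarith
  have hS0 : S = 0 := by linarith
  have hl : l = 0 := by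
    rcases mul_eq_zero.mp hl0 with h | h
    · exact_mod_cast h
    · exact absurd h (hpos 0).ne'
  refine ⟨rfl, hjj1, hl, ?_⟩
  intro k hk1 hkr hkd
  have hkmem : k ∈ Finset.Icc 1 (r - 1) := Finset.mem_Icc.mpr ⟨hk1, by omega⟩
  have := (Finset.sum_eq_zero_iff_of_nonneg fun k _ => hterm k).mp hS0 k hkmem
  rcases mul_eq_zero.mp this with h | h
  · exact_mod_cast h
  · exact absurd h (hpos k).ne'

end DuttaPaper
end
end
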